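/- Let Z* := p_w^{-1} Z. Then Z* − E[Z*] = Σ_{ℓ=1}^m V_ℓ, and the random variables V_1, …, V_m are pairwise uncorrelated with mean zero: E[V_ℓ] = 0 for all ℓ, and E[V_ℓ V_{ℓ'}] = 0 for ℓ ≠ ℓ'. Consequently Var Z* = Σ_{ℓ=1}^m E[V_ℓ²]. -/

import Mathlib

open MeasureTheory ProbabilityTheory Filter Topology

noncomputable section

/-- The number of occurrences of the word `w` (of length `m`) as a subsequence of the
first `n` letters `x 0, …, x (n-1)` of the text `x`. -/
def subseqCount {A : Type*} [DecidableEq A] (n m : ℕ) (w : Fin m → A) (x : ℕ → A) : ℕ :=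
  ((Finset.univ : Finset (Fin m → Fin n)).filter
    (fun α => (∀ i j : Fin m, i < j → α i < α j) ∧ ∀ j, x (α j : ℕ) = w j)).card

/-- `φ_a(x) := p_a⁻¹ 1{x = a} - 1`. -/
def phi {A : Type*} [DecidableEq A] (p : A → ℝ) (a x : A) : ℝ :=
  (p a)⁻¹ * (if x = a then 1 else 0) - 1

/-- Extend a (1-indexed) sequence `β_1 < ⋯ < β_ℓ` of positions in `{1,…,n}` by the
conventions `β_0 = 0` and `β_{ℓ+1} = n+1`.  Here `β : Fin ℓ → ℕ` lists `β_1,…,β_ℓ`. -/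
def extSeq (n ℓ : ℕ) (β : Fin ℓ → ℕ) (k : Fin (ℓ + 2)) : ℕ :=
  if h0 : (k : ℕ) = 0 then 0
  else if h1 : (k : ℕ) = ℓ + 1 then n + 1
  else β ⟨(k : ℕ) - 1, by have hk := k.isLt; omega⟩

/-- The combinatorial coefficient
`c(β,γ) = ∏_{k=1}^{ℓ+1} C(β_k - β_{k-1} - 1, γ_k - γ_{k-1} - 1)`,
with `β_0 = γ_0 = 0`, `β_{ℓ+1} = n+1`, `γ_{ℓ+1} = m+1`.  The subsets
`β ⊆ {1,…,n}` and `γ ⊆ {1,…,m}` are encoded by strictly increasing maps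
`Fin ℓ → Fin n` and `Fin ℓ → Fin m` (0-indexed, whence the `+ 1`'s). -/
def gapCoeff (n m ℓ : ℕ) (β : Fin ℓ → Fin n) (γ : Fin ℓ → Fin m) : ℕ :=
  ∏ k : Fin (ℓ + 1),
    Nat.choose
      (extSeq n ℓ (fun i => (β i : ℕ) + 1) k.succ
        - extSeq n ℓ (fun i => (β i : ℕ) + 1) k.castSucc - 1)
      (extSeq m ℓ (fun i => (γ i : ℕ) + 1) k.succ
        - extSeq m ℓ (fun i => (γ i : ℕ) + 1) k.castSucc - 1)

/-- The random variable `V_ℓ = Σ_β Σ_γ c(β,γ) ∏_{k=1}^ℓ φ_{w_{γ_k}}(ξ_{β_k})`,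
where `β`, `γ` run over strictly increasing maps (i.e. `ℓ`-subsets). -/
def Vell {A : Type*} {Ω : Type*} [DecidableEq A] (p : A → ℝ) (n m : ℕ)
    (w : Fin m → A) (ξ : ℕ → Ω → A) (ℓ : ℕ) (ω : Ω) : ℝ :=
  ∑ β ∈ Finset.univ.filter (fun β : Fin ℓ → Fin n => ∀ i j : Fin ℓ, i < j → β i < β j),
    ∑ γ ∈ Finset.univ.filter (fun γ : Fin ℓ → Fin m => ∀ i j : Fin ℓ, i < j → γ i < γ j),
      (gapCoeff n m ℓ β γ : ℝ) * ∏ k : Fin ℓ, phi p (w (γ k)) (ξ (β k : ℕ) ω)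

namespace HDAux

open Finset

lemma card_strictMono (m n : ℕ) :
    ((Finset.univ : Finset (Fin m → Fin n)).filter (fun α => StrictMono α)).card
      = n.choose m := by
  have h1 : (Finset.powersetCard m (Finset.univ : Finset (Fin n))).card = n.choose m := by
    simp [Finset.card_powersetCard]
  rw [← h1]
  refine Finset.card_bij' (fun α _ => Finset.image α Finset.univ)
    (fun s hs => (s.orderEmbOfFin (Finset.mem_powersetCard.mp hs).2 : Fin m → Fin n))
    ?_ ?_ ?_ ?_
  · intro α hα
    rw [Finset.mem_filter] at hα
    rw [Finset.mem_powersetCard]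
    refine ⟨Finset.subset_univ _, ?_⟩
    rw [Finset.card_image_of_injective _ hα.2.injective]
    simp
  · intro s hs
    simp only [Finset.mem_filter, Finset.mem_univ, true_and]
    exact (s.orderEmbOfFin _).strictMono
  · intro α hα
    rw [Finset.mem_filter] at hα
    exact (Finset.orderEmbOfFin_unique _
      (fun x => Finset.mem_image_of_mem _ (Finset.mem_univ x)) hα.2).symm
  · intro s hs
    apply Finset.coe_injective
    rw [Finset.coe_image, Finset.coe_univ, Set.image_univ, Finset.range_orderEmbOfFin]

lemma gapCoeff_zero (n m : ℕ) (β : Fin 0 → Fin n) (γ : Fin 0 → Fin m) :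
    gapCoeff n m 0 β γ = n.choose m := by
  rw [gapCoeff, Fin.prod_univ_one]
  have h1 : ∀ (N : ℕ) (δ : Fin 0 → ℕ), extSeq N 0 δ (0 : Fin 1).succ = N + 1 := by
    intro N δ; simp [extSeq]
  have h2 : ∀ (N : ℕ) (δ : Fin 0 → ℕ), extSeq N 0 δ (0 : Fin 1).castSucc = 0 := by
    intro N δ; simp [extSeq]
  rw [h1, h1, h2, h2]
  congr 1 <;> omega

end HDAux
namespace HDAux

open Finset

lemma extSeq_zero {N ℓ : ℕ} (δ : Fin ℓ → ℕ) {k : Fin (ℓ+2)} (h : (k : ℕ) = 0) :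
    extSeq N ℓ δ k = 0 := by
  rw [extSeq, dif_pos h]

lemma extSeq_last {N ℓ : ℕ} (δ : Fin ℓ → ℕ) {k : Fin (ℓ+2)} (h : (k : ℕ) = ℓ + 1) :
    extSeq N ℓ δ k = N + 1 := by
  rw [extSeq, dif_neg (by omega), dif_pos h]

lemma extSeq_mid {N ℓ : ℕ} (δ : Fin ℓ → ℕ) {k : Fin (ℓ+2)} (h0 : 0 < (k : ℕ))
    (h1 : (k : ℕ) < ℓ + 1) :
    extSeq N ℓ δ k = δ ⟨(k : ℕ) - 1, by omega⟩ := by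
  rw [extSeq, dif_neg (by omega), dif_neg (by omega)]

lemma extSeq_cast {N ℓ : ℕ} (β : Fin (ℓ+1) → Fin N) (j : Fin (ℓ+2)) :
    extSeq N (ℓ+1) (fun i => (β i : ℕ) + 1) j.castSucc
      = extSeq ((β (Fin.last ℓ) : ℕ)) ℓ
          (fun i => (β i.castSucc : ℕ) + 1) j := by
  have hj : (j.castSucc : ℕ) = (j : ℕ) := rfl
  rcases Nat.eq_zero_or_pos (j : ℕ) with h0 | h0
  · rw [extSeq_zero _ (by omega), extSeq_zero _ (by omega)]
  rcases eq_or_ne (j : ℕ) (ℓ+1) with h1 | h1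
  · rw [extSeq_mid _ (by omega) (by omega), extSeq_last _ (by omega)]
    have : (⟨(j.castSucc : ℕ) - 1, by simp [hj]; omega⟩ : Fin (ℓ+1)) = Fin.last ℓ := by
      apply Fin.ext; simp [hj, h1]
    rw [this]
  · have hlt : (j : ℕ) < ℓ + 1 := by have := j.isLt; omega
    rw [extSeq_mid _ (by omega) (by omega), extSeq_mid _ (by omega) (by omega)]
    congr 2

lemma gapCoeff_succ {n m ℓ : ℕ} (β : Fin (ℓ+1) → Fin n) (γ : Fin (ℓ+1) → Fin m)
    (hβ : StrictMono β) (hγ : StrictMono γ) :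
    gapCoeff n m (ℓ+1) β γ
      = gapCoeff ((β (Fin.last ℓ) : ℕ)) ((γ (Fin.last ℓ) : ℕ)) ℓ
          (fun k => ⟨(β k.castSucc : ℕ), hβ (Fin.castSucc_lt_last k)⟩)
          (fun k => ⟨(γ k.castSucc : ℕ), hγ (Fin.castSucc_lt_last k)⟩)
        * Nat.choose (n - 1 - (β (Fin.last ℓ) : ℕ)) (m - 1 - (γ (Fin.last ℓ) : ℕ)) := by
  rw [gapCoeff, gapCoeff, Fin.prod_univ_castSucc]
  congr 1
  · apply Finset.prod_congr rfl
    intro k _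
    have e1 : (k.castSucc).succ = (k.succ).castSucc := (Fin.succ_castSucc k).symm
    rw [e1, extSeq_cast β, extSeq_cast β, extSeq_cast γ, extSeq_cast γ]
  · have e1 : extSeq n (ℓ+1) (fun i => (β i : ℕ) + 1) (Fin.last (ℓ+1)).succ = n + 1 :=
      extSeq_last _ (by simp)
    have e2 : extSeq n (ℓ+1) (fun i => (β i : ℕ) + 1) (Fin.last (ℓ+1)).castSucc
        = (β (Fin.last ℓ) : ℕ) + 1 := by
      rw [extSeq_mid _ (by simp) (by simp)]
      congr 2
    have e3 : extSeq m (ℓ+1) (fun i => (γ i : ℕ) + 1) (Fin.last (ℓ+1)).succ = m + 1 :=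
      extSeq_last _ (by simp)
    have e4 : extSeq m (ℓ+1) (fun i => (γ i : ℕ) + 1) (Fin.last (ℓ+1)).castSucc
        = (γ (Fin.last ℓ) : ℕ) + 1 := by
      rw [extSeq_mid _ (by simp) (by simp)]
      congr 2
    rw [e1, e2, e3, e4]
    congr 1 <;> omega

end HDAux
namespace HDAux

open Finset

section Maps

variable {m n : ℕ} (G : Fin m) (B : Fin n)

def fwdA (α : Fin m → Fin n)
    (h : ∀ (j : ℕ) (hj : j < (G : ℕ)), (α ⟨j, lt_trans hj G.isLt⟩ : ℕ) < (B : ℕ)) :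
    Fin (G : ℕ) → Fin (B : ℕ) :=
  fun j => ⟨(α ⟨(j : ℕ), lt_trans j.isLt G.isLt⟩ : ℕ), h (j : ℕ) j.isLt⟩

def fwdB (α : Fin m → Fin n)
    (h : ∀ (j : ℕ) (hj : (G : ℕ) < j) (hj2 : j < m), (B : ℕ) < (α ⟨j, hj2⟩ : ℕ)) :
    Fin (m - 1 - (G : ℕ)) → Fin (n - 1 - (B : ℕ)) :=
  fun j => ⟨(α ⟨(G : ℕ) + 1 + (j : ℕ), by have := j.isLt; omega⟩ : ℕ) - ((B : ℕ) + 1), by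
    have h5 := h ((G : ℕ) + 1 + (j : ℕ)) (by omega) (by have := j.isLt; omega)
    have h6 := (α ⟨(G : ℕ) + 1 + (j : ℕ), by have := j.isLt; omega⟩).isLt
    omega⟩

def bwdMap (c : (Fin (G : ℕ) → Fin (B : ℕ)) ×
    (Fin (m - 1 - (G : ℕ)) → Fin (n - 1 - (B : ℕ)))) : Fin m → Fin n := fun j =>
  if h : (j : ℕ) < (G : ℕ) then ⟨(c.1 ⟨(j : ℕ), h⟩ : ℕ), lt_trans (Fin.isLt _) B.isLt⟩
  else if h2 : (j : ℕ) = (G : ℕ) then B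
  else ⟨(B : ℕ) + 1 + (c.2 ⟨(j : ℕ) - (G : ℕ) - 1, by have := j.isLt; omega⟩ : ℕ), by
    have := (c.2 ⟨(j : ℕ) - (G : ℕ) - 1, by have := j.isLt; omega⟩).isLt; omega⟩

variable {G B}

lemma fwdA_val {α h} (j : Fin (G : ℕ)) :
    (fwdA G B α h j : ℕ) = (α ⟨(j : ℕ), lt_trans j.isLt G.isLt⟩ : ℕ) := rfl

lemma fwdB_val {α h} (j : Fin (m - 1 - (G : ℕ))) :
    (fwdB G B α h j : ℕ)
      = (α ⟨(G : ℕ) + 1 + (j : ℕ), by have := j.isLt; omega⟩ : ℕ) - ((B : ℕ) + 1) := rfl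

lemma bwdMap_val_lt {c} {j : Fin m} (h : (j : ℕ) < (G : ℕ)) :
    (bwdMap G B c j : ℕ) = (c.1 ⟨(j : ℕ), h⟩ : ℕ) := by
  rw [bwdMap, dif_pos h]

lemma bwdMap_val_eq {c} {j : Fin m} (h : (j : ℕ) = (G : ℕ)) :
    bwdMap G B c j = B := by
  rw [bwdMap, dif_neg (by omega), dif_pos h]

lemma bwdMap_val_gt {c} {j : Fin m} (h : (G : ℕ) < (j : ℕ)) :
    (bwdMap G B c j : ℕ)
      = (B : ℕ) + 1 + (c.2 ⟨(j : ℕ) - (G : ℕ) - 1, by have := j.isLt; omega⟩ : ℕ) := by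
  rw [bwdMap, dif_neg (by omega), dif_neg (by omega)]

end Maps

lemma card_ext (ℓ : ℕ) : ∀ {m n : ℕ} (γ : Fin ℓ → Fin m) (β : Fin ℓ → Fin n),
    StrictMono γ → StrictMono β →
    ((Finset.univ : Finset (Fin m → Fin n)).filter
      (fun α => StrictMono α ∧ ∀ k, α (γ k) = β k)).card = gapCoeff n m ℓ β γ := by
  induction ℓ with
  | zero =>
    intro m n γ β _ _
    rw [gapCoeff_zero, ← card_strictMono m n]
    congr 1
    apply Finset.filter_congr
    intro α _
    simp
  | succ ℓ IH =>
    intro m n γ β hγ hβ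
    have hgm : (γ (Fin.last ℓ) : ℕ) < m := (γ (Fin.last ℓ)).isLt
    have hbn : (β (Fin.last ℓ) : ℕ) < n := (β (Fin.last ℓ)).isLt
    have hγ' : StrictMono (fun k : Fin ℓ =>
        (⟨(γ k.castSucc : ℕ), hγ (Fin.castSucc_lt_last k)⟩ : Fin (γ (Fin.last ℓ) : ℕ))) := by
      intro i j hij
      simp only [Fin.mk_lt_mk]
      exact hγ (by rwa [Fin.castSucc_lt_castSucc_iff])
    have hβ' : StrictMono (fun k : Fin ℓ =>
        (⟨(β k.castSucc : ℕ), hβ (Fin.castSucc_lt_last k)⟩ : Fin (β (Fin.last ℓ) : ℕ))) := by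
      intro i j hij
      simp only [Fin.mk_lt_mk]
      exact hβ (by rwa [Fin.castSucc_lt_castSucc_iff])
    have hA : ∀ (α : Fin m → Fin n), StrictMono α → (∀ k, α (γ k) = β k) →
        ∀ (j : ℕ) (hj : j < (γ (Fin.last ℓ) : ℕ)),
          (α ⟨j, lt_trans hj hgm⟩ : ℕ) < (β (Fin.last ℓ) : ℕ) := by
      intro α h1 h2 j hj
      have h3 : (⟨j, lt_trans hj hgm⟩ : Fin m) < γ (Fin.last ℓ) := by
        rw [Fin.lt_def]; exact hj
      have h4 := h1 h3
      rw [h2 (Fin.last ℓ)] at h4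
      exact h4
    have hB : ∀ (α : Fin m → Fin n), StrictMono α → (∀ k, α (γ k) = β k) →
        ∀ (j : ℕ) (hj : (γ (Fin.last ℓ) : ℕ) < j) (hj2 : j < m),
          (β (Fin.last ℓ) : ℕ) < (α ⟨j, hj2⟩ : ℕ) := by
      intro α h1 h2 j hj hj2
      have h3 : γ (Fin.last ℓ) < (⟨j, hj2⟩ : Fin m) := by
        rw [Fin.lt_def]; exact hj
      have h4 := h1 h3
      rw [h2 (Fin.last ℓ)] at h4
      exact h4
    rw [gapCoeff_succ β γ hβ hγ, ← IH _ _ hγ' hβ',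
      ← card_strictMono (m - 1 - (γ (Fin.last ℓ) : ℕ)) (n - 1 - (β (Fin.last ℓ) : ℕ)),
      ← Finset.card_product]
    refine Finset.card_bij'
      (fun α hα =>
        (fwdA (γ (Fin.last ℓ)) (β (Fin.last ℓ)) α
          (hA α (Finset.mem_filter.mp hα).2.1 (Finset.mem_filter.mp hα).2.2),
         fwdB (γ (Fin.last ℓ)) (β (Fin.last ℓ)) α
          (hB α (Finset.mem_filter.mp hα).2.1 (Finset.mem_filter.mp hα).2.2)))
      (fun c _ => bwdMap (γ (Fin.last ℓ)) (β (Fin.last ℓ)) c) ?_ ?_ ?_ ?_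
    · -- forward maps into product
      intro α hα
      beta_reduce
      obtain ⟨-, h1, h2⟩ := Finset.mem_filter.mp hα
      rw [Finset.mem_product]
      constructor
      · rw [Finset.mem_filter]
        refine ⟨Finset.mem_univ _, ?_, ?_⟩
        · intro i j hij
          rw [Fin.lt_def, fwdA_val, fwdA_val]
          have : (⟨(i : ℕ), lt_trans i.isLt hgm⟩ : Fin m) < ⟨(j : ℕ), lt_trans j.isLt hgm⟩ := by
            rw [Fin.lt_def]; exact hij
          exact h1 this
        · intro k
          apply Fin.ext
          rw [fwdA_val]
          have he : (⟨(((⟨(γ k.castSucc : ℕ), hγ (Fin.castSucc_lt_last k)⟩ :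
              Fin (γ (Fin.last ℓ) : ℕ))) : ℕ), lt_trans (Fin.isLt _) hgm⟩ : Fin m)
              = γ k.castSucc := by
            apply Fin.ext; rfl
          rw [he, h2 k.castSucc]
      · rw [Finset.mem_filter]
        refine ⟨Finset.mem_univ _, ?_⟩
        intro i j hij
        rw [Fin.lt_def, fwdB_val, fwdB_val]
        have hij' : (i : ℕ) < (j : ℕ) := hij
        have hlt : (⟨(γ (Fin.last ℓ) : ℕ) + 1 + (i : ℕ), by have := i.isLt; omega⟩ : Fin m)
            < ⟨(γ (Fin.last ℓ) : ℕ) + 1 + (j : ℕ), by have := j.isLt; omega⟩ := by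
          rw [Fin.lt_def]; simp only; omega
        have h5 := h1 hlt
        rw [Fin.lt_def] at h5
        have h6 := hB α h1 h2 ((γ (Fin.last ℓ) : ℕ) + 1 + (i : ℕ)) (by omega)
          (by have := i.isLt; omega)
        omega
    · -- backward maps into S
      intro c hc
      beta_reduce
      rw [Finset.mem_product, Finset.mem_filter, Finset.mem_filter] at hc
      obtain ⟨⟨-, hm1, he1⟩, -, hm2⟩ := hc
      rw [Finset.mem_filter]
      refine ⟨Finset.mem_univ _, ?_, ?_⟩
      · intro i j hij
        have hij' : (i : ℕ) < (j : ℕ) := hij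
        rw [Fin.lt_def]
        rcases lt_trichotomy ((j : ℕ)) ((γ (Fin.last ℓ) : ℕ)) with h2 | h2 | h2
        · have h1 : (i : ℕ) < (γ (Fin.last ℓ) : ℕ) := by omega
          rw [bwdMap_val_lt h1, bwdMap_val_lt h2]
          have := hm1 (show (⟨(i : ℕ), h1⟩ : Fin (γ (Fin.last ℓ) : ℕ)) < ⟨(j : ℕ), h2⟩ by
            rw [Fin.lt_def]; exact hij')
          rw [Fin.lt_def] at this
          exact this
        · have h1 : (i : ℕ) < (γ (Fin.last ℓ) : ℕ) := by omega
          rw [bwdMap_val_lt h1, bwdMap_val_eq h2]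
          exact (c.1 ⟨(i : ℕ), h1⟩).isLt
        · rw [bwdMap_val_gt h2]
          rcases lt_trichotomy ((i : ℕ)) ((γ (Fin.last ℓ) : ℕ)) with h1 | h1 | h1
          · rw [bwdMap_val_lt h1]
            have := (c.1 ⟨(i : ℕ), h1⟩).isLt
            omega
          · rw [bwdMap_val_eq h1]
            omega
          · rw [bwdMap_val_gt h1]
            have := hm2 (show (⟨(i : ℕ) - (γ (Fin.last ℓ) : ℕ) - 1,
                by have := i.isLt; omega⟩ : Fin (m - 1 - (γ (Fin.last ℓ) : ℕ)))
                < ⟨(j : ℕ) - (γ (Fin.last ℓ) : ℕ) - 1, by have := j.isLt; omega⟩ by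
              rw [Fin.lt_def]; simp only; omega)
            rw [Fin.lt_def] at this
            omega
      · intro k
        induction k using Fin.lastCases with
        | last => exact bwdMap_val_eq rfl
        | cast k =>
          have hlt : (γ k.castSucc : ℕ) < (γ (Fin.last ℓ) : ℕ) := hγ (Fin.castSucc_lt_last k)
          apply Fin.ext
          rw [bwdMap_val_lt hlt]
          have := he1 k
          have hval : ((c.1 ⟨(γ k.castSucc : ℕ), hlt⟩ : Fin (β (Fin.last ℓ) : ℕ)) : ℕ)
              = ((c.1 (⟨(γ k.castSucc : ℕ), hγ (Fin.castSucc_lt_last k)⟩ :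
                  Fin (γ (Fin.last ℓ) : ℕ))) : ℕ) := rfl
          rw [hval, this]
    · -- left inverse
      intro α hα
      beta_reduce
      obtain ⟨-, h1, h2⟩ := Finset.mem_filter.mp hα
      funext j
      apply Fin.ext
      rcases lt_trichotomy ((j : ℕ)) ((γ (Fin.last ℓ) : ℕ)) with hc1 | hc1 | hc1
      · rw [bwdMap_val_lt hc1, fwdA_val]
      · rw [bwdMap_val_eq hc1]
        have : γ (Fin.last ℓ) = j := by apply Fin.ext; omega
        rw [← this, h2 (Fin.last ℓ)]
      · rw [bwdMap_val_gt hc1, fwdB_val]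
        have hidx : (⟨(γ (Fin.last ℓ) : ℕ) + 1 + ((j : ℕ) - (γ (Fin.last ℓ) : ℕ) - 1),
            by have := j.isLt; omega⟩ : Fin m) = j := by
          apply Fin.ext; simp only; omega
        rw [hidx]
        have h5 := hB α h1 h2 (j : ℕ) hc1 j.isLt
        have hj' : α ⟨(j : ℕ), j.isLt⟩ = α j := rfl
        rw [hj'] at h5
        omega
    · -- right inverse
      intro c hc
      beta_reduce
      apply Prod.ext
      · funext j
        apply Fin.ext
        rw [fwdA_val]
        have hj : ((⟨(j : ℕ), lt_trans j.isLt hgm⟩ : Fin m) : ℕ) < (γ (Fin.last ℓ) : ℕ) :=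
          j.isLt
        rw [bwdMap_val_lt hj]
      · funext j
        apply Fin.ext
        rw [fwdB_val]
        have hj : (γ (Fin.last ℓ) : ℕ) <
            ((⟨(γ (Fin.last ℓ) : ℕ) + 1 + (j : ℕ), by have := j.isLt; omega⟩ : Fin m) : ℕ) := by
          simp only; omega
        rw [bwdMap_val_gt hj]
        have hidx : (⟨((⟨(γ (Fin.last ℓ) : ℕ) + 1 + (j : ℕ), by have := j.isLt; omega⟩ :
            Fin m) : ℕ) - (γ (Fin.last ℓ) : ℕ) - 1, by have := j.isLt; omega⟩ :
            Fin (m - 1 - (γ (Fin.last ℓ) : ℕ))) = j := by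
          apply Fin.ext; simp only; omega
        rw [hidx]
        omega

end HDAux
namespace HDAux

open Finset

lemma strictMono_iff' {k N : ℕ} (f : Fin k → Fin N) :
    (∀ i j : Fin k, i < j → f i < f j) ↔ StrictMono f :=
  ⟨fun h _ _ hab => h _ _ hab, fun h i j hij => h hij⟩

lemma image_orderEmbOfFin {N k : ℕ} (t : Finset (Fin N)) (h : t.card = k) :
    Finset.image (t.orderEmbOfFin h) Finset.univ = t := by
  apply Finset.coe_injective
  rw [Finset.coe_image, Finset.coe_univ, Set.image_univ, Finset.range_orderEmbOfFin]

lemma pointwise {A : Type*} [DecidableEq A] (p : A → ℝ)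
    (n m : ℕ) (w : Fin m → A) (x : ℕ → A) :
    (∏ j, p (w j))⁻¹ * (subseqCount n m w x : ℝ)
      = ∑ ℓ ∈ Finset.range (m+1),
          ∑ β ∈ Finset.univ.filter (fun β : Fin ℓ → Fin n => ∀ i j : Fin ℓ, i < j → β i < β j),
            ∑ γ ∈ Finset.univ.filter (fun γ : Fin ℓ → Fin m => ∀ i j : Fin ℓ, i < j → γ i < γ j),
              (gapCoeff n m ℓ β γ : ℝ) * ∏ k : Fin ℓ, phi p (w (γ k)) (x (β k : ℕ)) := by
  -- Step A: LHS as a sum over increasing maps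
  have stepA : (∏ j, p (w j))⁻¹ * (subseqCount n m w x : ℝ)
      = ∑ α ∈ Finset.univ.filter (fun α : Fin m → Fin n => ∀ i j : Fin m, i < j → α i < α j),
          ∏ j : Fin m, (1 + phi p (w j) (x (α j : ℕ))) := by
    have h1 : ∀ α : Fin m → Fin n,
        ∏ j : Fin m, (1 + phi p (w j) (x (α j : ℕ)))
          = (∏ j, p (w j))⁻¹ * (if ∀ j : Fin m, x (α j : ℕ) = w j then (1:ℝ) else 0) := by
      intro α
      have h2 : ∀ j : Fin m, 1 + phi p (w j) (x (α j : ℕ))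
          = (p (w j))⁻¹ * (if x (α j : ℕ) = w j then (1:ℝ) else 0) := by
        intro j; rw [phi]; ring
      rw [Finset.prod_congr rfl (fun j _ => h2 j), Finset.prod_mul_distrib,
        Finset.prod_inv_distrib, Finset.prod_boole]
      congr 1
      simp
    rw [Finset.sum_congr rfl (fun α _ => h1 α), ← Finset.mul_sum]
    congr 1
    rw [Finset.sum_boole, subseqCount, Finset.filter_filter]
  rw [stepA]
  -- Step B: expand the product
  have stepB : ∀ α : Fin m → Fin n,
      ∏ j : Fin m, (1 + phi p (w j) (x (α j : ℕ)))
        = ∑ t ∈ (Finset.univ : Finset (Fin m)).powerset,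
            ∏ j ∈ t, phi p (w j) (x (α j : ℕ)) := by
    intro α
    have := Finset.prod_add (fun j : Fin m => phi p (w j) (x (α j : ℕ)))
      (fun _ => (1:ℝ)) Finset.univ
    simp only [Finset.prod_const_one, mul_one] at this
    rw [← this]
    apply Finset.prod_congr rfl
    intro j _
    ring
  rw [Finset.sum_congr rfl (fun α _ => stepB α), Finset.sum_comm]
  -- Step D: group subsets by cardinality
  rw [Finset.sum_powerset]
  have hcard : #(Finset.univ : Finset (Fin m)) = m := by simp
  rw [hcard]
  apply Finset.sum_congr rfl
  intro ℓ hℓ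
  -- Step E: subsets of size ℓ ↔ increasing maps γ
  conv_rhs => rw [Finset.sum_comm]
  refine Finset.sum_bij'
    (fun t (ht : t ∈ Finset.powersetCard ℓ (Finset.univ : Finset (Fin m))) =>
      ((t.orderEmbOfFin (Finset.mem_powersetCard.mp ht).2 : Fin ℓ → Fin m)))
    (fun γ _ => Finset.image γ Finset.univ) ?_ ?_ ?_ ?_ ?_
  · intro t ht
    simp only [Finset.mem_filter, Finset.mem_univ, true_and]
    intro i j hij
    exact (t.orderEmbOfFin _).strictMono hij
  · intro γ hγ
    rw [Finset.mem_filter] at hγ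
    have hγm : StrictMono γ := (strictMono_iff' γ).mp hγ.2
    rw [Finset.mem_powersetCard]
    refine ⟨Finset.subset_univ _, ?_⟩
    rw [Finset.card_image_of_injective _ hγm.injective]
    simp
  · intro t ht
    exact image_orderEmbOfFin t _
  · intro γ hγ
    rw [Finset.mem_filter] at hγ
    have hγm : StrictMono γ := (strictMono_iff' γ).mp hγ.2
    exact (Finset.orderEmbOfFin_unique _
      (fun x => Finset.mem_image_of_mem _ (Finset.mem_univ x)) hγm).symm
  · -- value compatibility + Step F
    intro t ht
    have htc : t.card = ℓ := (Finset.mem_powersetCard.mp ht).2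
    set γ : Fin ℓ → Fin m := (t.orderEmbOfFin htc : Fin ℓ → Fin m) with hγdef
    have hγm : StrictMono γ := (t.orderEmbOfFin htc).strictMono
    have hprod : ∀ α : Fin m → Fin n,
        ∏ j ∈ t, phi p (w j) (x (α j : ℕ))
          = ∏ k : Fin ℓ, phi p (w (γ k)) (x (α (γ k) : ℕ)) := by
      intro α
      conv_lhs => rw [← image_orderEmbOfFin t htc]
      rw [Finset.prod_image]
      intro a _ b _ hab
      exact (t.orderEmbOfFin htc).injective hab
    rw [Finset.sum_congr rfl (fun α _ => hprod α)]
    -- Step F: group increasing α by β = α ∘ γ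
    have hmaps : ∀ α ∈ Finset.univ.filter
        (fun α : Fin m → Fin n => ∀ i j : Fin m, i < j → α i < α j),
        (α ∘ γ) ∈ Finset.univ.filter
          (fun β : Fin ℓ → Fin n => ∀ i j : Fin ℓ, i < j → β i < β j) := by
      intro α hα
      rw [Finset.mem_filter] at hα ⊢
      refine ⟨Finset.mem_univ _, fun i j hij => hα.2 _ _ (hγm hij)⟩
    rw [← Finset.sum_fiberwise_of_maps_to hmaps
      (fun α => ∏ k : Fin ℓ, phi p (w (γ k)) (x (α (γ k) : ℕ)))]
    apply Finset.sum_congr rfl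
    intro β hβ
    rw [Finset.mem_filter] at hβ
    have hβm : StrictMono β := (strictMono_iff' β).mp hβ.2
    have hin : ∀ α ∈ (Finset.univ.filter
          (fun α : Fin m → Fin n => ∀ i j : Fin m, i < j → α i < α j)).filter
          (fun α => α ∘ γ = β),
        (∏ k : Fin ℓ, phi p (w (γ k)) (x (α (γ k) : ℕ)))
          = ∏ k : Fin ℓ, phi p (w (γ k)) (x (β k : ℕ)) := by
      intro α hα
      rw [Finset.mem_filter] at hα
      apply Finset.prod_congr rfl
      intro k _
      rw [show α (γ k) = β k from congrFun hα.2 k]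
    rw [Finset.sum_congr rfl hin, Finset.sum_const, nsmul_eq_mul]
    congr 2
    rw [Finset.filter_filter, ← card_ext ℓ γ β hγm hβm]
    congr 1
    apply Finset.filter_congr
    intro α _
    constructor
    · rintro ⟨hh1, hh2⟩
      exact ⟨(strictMono_iff' α).mp hh1, fun k => congrFun hh2 k⟩
    · rintro ⟨hh1, hh2⟩
      exact ⟨fun i j hij => hh1 hij, funext hh2⟩

end HDAux
namespace HDAux

open Finset MeasureTheory ProbabilityTheory

variable {A : Type*} [Fintype A] [DecidableEq A] [MeasurableSpace A] [MeasurableSingletonClass A]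
  {Ω : Type*} [MeasurableSpace Ω] {μ : Measure Ω} [IsProbabilityMeasure μ]
  {ξ : ℕ → Ω → A}

lemma meas_comp (hmeas : ∀ i, Measurable (ξ i)) (i : ℕ) (f : A → ℝ) :
    Measurable (fun ω => f (ξ i ω)) := (measurable_of_countable f).comp (hmeas i)

lemma integrable_bdd {f : Ω → ℝ} (hm : Measurable f) (C : ℝ) (hC : ∀ ω, |f ω| ≤ C) :
    Integrable f μ := by
  refine (integrable_const C).mono' hm.aestronglyMeasurable ?_
  exact Filter.Eventually.of_forall (fun ω => by simpa using hC ω)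

lemma abs_le_sumabs (f : A → ℝ) (a : A) : |f a| ≤ ∑ b, |f b| :=
  Finset.single_le_sum (fun b _ => abs_nonneg (f b)) (Finset.mem_univ a)

lemma measurable_term {ι : Type*} [Fintype ι] (hmeas : ∀ i, Measurable (ξ i))
    (c : ℝ) (b : ι → ℕ) (f : ι → A → ℝ) :
    Measurable (fun ω => c * ∏ k, f k (ξ (b k) ω)) :=
  (Finset.measurable_prod Finset.univ
    (fun k _ => meas_comp hmeas (b k) (f k))).const_mul c

lemma bound_term {ι : Type*} [Fintype ι]
    (c : ℝ) (b : ι → ℕ) (f : ι → A → ℝ) (ω : Ω) :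
    |c * ∏ k, f k (ξ (b k) ω)| ≤ |c| * ∏ k, ∑ a, |f k a| := by
  rw [abs_mul]
  apply mul_le_mul_of_nonneg_left _ (abs_nonneg c)
  rw [Finset.abs_prod]
  apply Finset.prod_le_prod (fun k _ => abs_nonneg _)
  intro k _
  exact abs_le_sumabs (f k) _

lemma integrable_term {ι : Type*} [Fintype ι] (hmeas : ∀ i, Measurable (ξ i))
    (c : ℝ) (b : ι → ℕ) (f : ι → A → ℝ) :
    Integrable (fun ω => c * ∏ k, f k (ξ (b k) ω)) μ :=
  integrable_bdd (measurable_term hmeas c b f) _ (bound_term c b f)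

lemma integral_prod_comp (hmeas : ∀ i, Measurable (ξ i))
    (hindep : iIndepFun ξ μ)
    (s : Finset ℕ) (f : ℕ → A → ℝ) :
    ∫ ω, ∏ i ∈ s, f i (ξ i ω) ∂μ = ∏ i ∈ s, ∫ ω, f i (ξ i ω) ∂μ := by
  classical
  induction s using Finset.induction_on with
  | empty => simp
  | insert a s ha ih =>
    have hη : ∀ i, Measurable (fun ω => f i (ξ i ω)) := fun i => meas_comp hmeas i (f i)
    have hPeq : (∏ j ∈ s, f j ∘ ξ j) = (fun ω' => ∏ i ∈ s, f i (ξ i ω')) := by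
      funext ω'
      simp [Finset.prod_apply]
    have hIndep : IndepFun (fun ω' => ∏ i ∈ s, f i (ξ i ω')) (fun ω => f a (ξ a ω)) μ := by
      have h0 := (hindep.comp (fun i => f i)
        (fun i => measurable_of_countable (f i))).indepFun_finsetProd_of_notMem
          (fun i => hη i) ha
      rw [hPeq] at h0
      exact h0
    have heq : (fun ω => ∏ i ∈ insert a s, f i (ξ i ω))
        = (fun ω' => ∏ i ∈ s, f i (ξ i ω')) * (fun ω => f a (ξ a ω)) := by
      funext ω
      simp only [Pi.mul_apply, Finset.prod_insert ha]
      ring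
    rw [heq, hIndep.integral_mul_eq_mul_integral
        ((Finset.measurable_prod s (fun i _ => hη i)).aestronglyMeasurable)
        ((hη a).aestronglyMeasurable), ih, Finset.prod_insert ha, mul_comm]

end HDAux
namespace HDAux

open Finset MeasureTheory ProbabilityTheory

variable {A : Type*} [Fintype A] [DecidableEq A] [MeasurableSpace A] [MeasurableSingletonClass A]
  {Ω : Type*} [MeasurableSpace Ω] {μ : Measure Ω} [IsProbabilityMeasure μ]
  {ξ : ℕ → Ω → A} {p : A → ℝ}

lemma integral_phi (hmeas : ∀ i, Measurable (ξ i)) (hp : ∀ a, 0 < p a)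
    (hdist : ∀ i a, μ {ω | ξ i ω = a} = ENNReal.ofReal (p a)) (i : ℕ) (a : A) :
    ∫ ω, phi p a (ξ i ω) ∂μ = 0 := by
  have hset : MeasurableSet {ω | ξ i ω = a} := (hmeas i) (MeasurableSet.singleton a)
  have hind : (fun ω => if ξ i ω = a then (1:ℝ) else 0)
      = Set.indicator {ω | ξ i ω = a} (fun _ => (1:ℝ)) := by
    funext ω
    rw [Set.indicator_apply]
    rfl
  have h1 : ∫ ω, (if ξ i ω = a then (1:ℝ) else 0) ∂μ = p a := by
    rw [hind, MeasureTheory.integral_indicator_const _ hset, measureReal_def, hdist i a,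
      ENNReal.toReal_ofReal (hp a).le, smul_eq_mul, mul_one]
  have hint : Integrable (fun ω => if ξ i ω = a then (1:ℝ) else 0) μ := by
    apply integrable_bdd (f := fun ω => if ξ i ω = a then (1:ℝ) else 0)
      (meas_comp hmeas i (fun x => if x = a then (1:ℝ) else 0)) 1
    intro ω
    split <;> simp
  have : (fun ω => phi p a (ξ i ω))
      = fun ω => (p a)⁻¹ * (if ξ i ω = a then (1:ℝ) else 0) - 1 := by
    funext ω; rw [phi]
  rw [this, integral_sub ((hint.const_mul _)) (integrable_const 1)]
  rw [MeasureTheory.integral_const_mul, h1, integral_const]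
  simp [inv_mul_cancel₀ (hp a).ne']

lemma integral_term_eq_prod {ι : Type*} [Fintype ι] [DecidableEq ι]
    (hmeas : ∀ i, Measurable (ξ i))
    (hindep : iIndepFun ξ μ)
    (b : ι → ℕ) (f : ι → A → ℝ) :
    ∫ ω, ∏ k, f k (ξ (b k) ω) ∂μ
      = ∏ i ∈ Finset.image b Finset.univ,
          ∫ ω, (∏ k ∈ Finset.univ.filter (fun k => b k = i), f k) (ξ i ω) ∂μ := by
  have h1 : ∀ ω, ∏ k, f k (ξ (b k) ω)
      = ∏ i ∈ Finset.image b Finset.univ,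
          (∏ k ∈ Finset.univ.filter (fun k => b k = i), f k) (ξ i ω) := by
    intro ω
    rw [← Finset.prod_fiberwise_of_maps_to
      (fun k _ => Finset.mem_image_of_mem b (Finset.mem_univ k))
      (fun k => f k (ξ (b k) ω))]
    apply Finset.prod_congr rfl
    intro i _
    rw [Finset.prod_apply]
    apply Finset.prod_congr rfl
    intro k hk
    rw [(Finset.mem_filter.mp hk).2]
  calc ∫ ω, ∏ k, f k (ξ (b k) ω) ∂μ
      = ∫ ω, ∏ i ∈ Finset.image b Finset.univ,
          (∏ k ∈ Finset.univ.filter (fun k => b k = i), f k) (ξ i ω) ∂μ := by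
        apply integral_congr_ae
        exact Filter.Eventually.of_forall (fun ω => h1 ω)
    _ = _ := integral_prod_comp hmeas hindep _ _

lemma integral_term_zero {ι : Type*} [Fintype ι] [DecidableEq ι]
    (hmeas : ∀ i, Measurable (ξ i))
    (hindep : iIndepFun ξ μ)
    (b : ι → ℕ) (f : ι → A → ℝ) (k₀ : ι)
    (huniq : ∀ k, b k = b k₀ → k = k₀)
    (hzero : ∫ ω, f k₀ (ξ (b k₀) ω) ∂μ = 0) :
    ∫ ω, ∏ k, f k (ξ (b k) ω) ∂μ = 0 := by
  rw [integral_term_eq_prod hmeas hindep]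
  apply Finset.prod_eq_zero (Finset.mem_image_of_mem b (Finset.mem_univ k₀))
  have hfib : Finset.univ.filter (fun k => b k = b k₀) = {k₀} := by
    ext k
    simp only [Finset.mem_filter, Finset.mem_univ, true_and, Finset.mem_singleton]
    exact ⟨huniq k, by rintro rfl; rfl⟩
  rw [hfib]
  simpa using hzero

end HDAux
namespace HDAux

open Finset MeasureTheory ProbabilityTheory

variable {A : Type*} [Fintype A] [DecidableEq A] [MeasurableSpace A] [MeasurableSingletonClass A]
  {Ω : Type*} [MeasurableSpace Ω] {μ : Measure Ω} [IsProbabilityMeasure μ]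
  {ξ : ℕ → Ω → A} {p : A → ℝ}

lemma inj_coe {k N : ℕ} {β : Fin k → Fin N} (h : ∀ i j : Fin k, i < j → β i < β j) :
    Function.Injective (fun i => (β i : ℕ)) := by
  intro i j hij
  exact ((strictMono_iff' β).mp h).injective (Fin.val_injective hij)

lemma measurable_Vell (hmeas : ∀ i, Measurable (ξ i)) (n m : ℕ) (w : Fin m → A) (ℓ : ℕ) :
    Measurable (Vell p n m w ξ ℓ) := by
  apply Finset.measurable_sum
  intro β _
  apply Finset.measurable_sum
  intro γ _
  exact measurable_term hmeas _ _ _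

lemma bound_Vell (n m : ℕ) (w : Fin m → A) (ℓ : ℕ) :
    ∃ C : ℝ, ∀ ω, |Vell p n m w ξ ℓ ω| ≤ C := by
  refine ⟨∑ β ∈ Finset.univ.filter (fun β : Fin ℓ → Fin n => ∀ i j : Fin ℓ, i < j → β i < β j),
    ∑ γ ∈ Finset.univ.filter (fun γ : Fin ℓ → Fin m => ∀ i j : Fin ℓ, i < j → γ i < γ j),
      |(gapCoeff n m ℓ β γ : ℝ)| * ∏ k : Fin ℓ, ∑ a, |phi p (w (γ k)) a|, ?_⟩
  intro ω
  refine (Finset.abs_sum_le_sum_abs _ _).trans (Finset.sum_le_sum ?_)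
  intro β _
  refine (Finset.abs_sum_le_sum_abs _ _).trans (Finset.sum_le_sum ?_)
  intro γ _
  exact bound_term _ (fun k => (β k : ℕ)) (fun k => phi p (w (γ k))) ω

lemma integrable_Vell (hmeas : ∀ i, Measurable (ξ i)) (n m : ℕ) (w : Fin m → A) (ℓ : ℕ) :
    Integrable (Vell p n m w ξ ℓ) μ := by
  obtain ⟨C, hC⟩ := bound_Vell (p := p) (ξ := ξ) n m w ℓ
  exact integrable_bdd (measurable_Vell hmeas n m w ℓ) C hC

lemma Vell_integral (hmeas : ∀ i, Measurable (ξ i))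
    (hindep : iIndepFun ξ μ) (hp : ∀ a, 0 < p a)
    (hdist : ∀ i a, μ {ω | ξ i ω = a} = ENNReal.ofReal (p a))
    (n m : ℕ) (w : Fin m → A) (ℓ : ℕ) (hℓ : 1 ≤ ℓ) :
    ∫ ω, Vell p n m w ξ ℓ ω ∂μ = 0 := by
  simp only [Vell]
  rw [integral_finset_sum _ (fun β _ => integrable_finset_sum _
    (fun γ _ => integrable_term hmeas _ _ _))]
  apply Finset.sum_eq_zero
  intro β hβ
  rw [integral_finset_sum _ (fun γ _ => integrable_term hmeas _ _ _)]
  apply Finset.sum_eq_zero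
  intro γ _
  rw [MeasureTheory.integral_const_mul]
  rw [Finset.mem_filter] at hβ
  have hzero : ∫ ω, ∏ k : Fin ℓ, phi p (w (γ k)) (ξ ((β k : ℕ)) ω) ∂μ = 0 := by
    apply integral_term_zero hmeas hindep (fun k => (β k : ℕ))
      (fun k => phi p (w (γ k))) ⟨0, by omega⟩
    · intro k hk
      exact inj_coe hβ.2 hk
    · exact integral_phi hmeas hp hdist _ _
  rw [hzero, mul_zero]

lemma term_mul_term {ι ι' : Type*} [Fintype ι] [Fintype ι'] (c c' : ℝ)
    (b : ι → ℕ) (b' : ι' → ℕ) (f : ι → A → ℝ) (f' : ι' → A → ℝ) (ω : Ω) :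
    (c * ∏ k, f k (ξ (b k) ω)) * (c' * ∏ k, f' k (ξ (b' k) ω))
      = (c * c') * ∏ k : ι ⊕ ι',
          Sum.elim f f' k (ξ (Sum.elim b b' k) ω) := by
  rw [Fintype.prod_sum_type]
  simp only [Sum.elim_inl, Sum.elim_inr]
  ring

lemma Vell_mul_integral (hmeas : ∀ i, Measurable (ξ i))
    (hindep : iIndepFun ξ μ) (hp : ∀ a, 0 < p a)
    (hdist : ∀ i a, μ {ω | ξ i ω = a} = ENNReal.ofReal (p a))
    (n m : ℕ) (w : Fin m → A) (ℓ ℓ' : ℕ) (hne : ℓ ≠ ℓ') :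
    ∫ ω, Vell p n m w ξ ℓ ω * Vell p n m w ξ ℓ' ω ∂μ = 0 := by
  have hrw : (fun ω => Vell p n m w ξ ℓ ω * Vell p n m w ξ ℓ' ω)
      = fun ω =>
        ∑ β ∈ Finset.univ.filter (fun β : Fin ℓ → Fin n => ∀ i j : Fin ℓ, i < j → β i < β j),
        ∑ β' ∈ Finset.univ.filter (fun β : Fin ℓ' → Fin n => ∀ i j : Fin ℓ', i < j → β i < β j),
        ∑ γ ∈ Finset.univ.filter (fun γ : Fin ℓ → Fin m => ∀ i j : Fin ℓ, i < j → γ i < γ j),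
        ∑ γ' ∈ Finset.univ.filter (fun γ : Fin ℓ' → Fin m => ∀ i j : Fin ℓ', i < j → γ i < γ j),
          ((gapCoeff n m ℓ β γ : ℝ) * (gapCoeff n m ℓ' β' γ' : ℝ)) *
            ∏ k : Fin ℓ ⊕ Fin ℓ',
              Sum.elim (fun k => phi p (w (γ k))) (fun k => phi p (w (γ' k))) k
                (ξ (Sum.elim (fun k => (β k : ℕ)) (fun k => (β' k : ℕ)) k) ω) := by
    funext ω
    simp only [Vell]
    rw [Finset.sum_mul_sum]
    apply Finset.sum_congr rfl; intro β _
    apply Finset.sum_congr rfl; intro β' _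
    rw [Finset.sum_mul_sum]
    apply Finset.sum_congr rfl; intro γ _
    apply Finset.sum_congr rfl; intro γ' _
    exact term_mul_term _ _ _ _ _ _ ω
  rw [hrw]
  rw [integral_finset_sum _ (fun β _ => integrable_finset_sum _ (fun β' _ =>
    integrable_finset_sum _ (fun γ _ => integrable_finset_sum _ (fun γ' _ =>
      integrable_term hmeas _ _ _))))]
  apply Finset.sum_eq_zero; intro β hβ
  rw [integral_finset_sum _ (fun β' _ => integrable_finset_sum _ (fun γ _ =>
    integrable_finset_sum _ (fun γ' _ => integrable_term hmeas _ _ _)))]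
  apply Finset.sum_eq_zero; intro β' hβ'
  rw [integral_finset_sum _ (fun γ _ => integrable_finset_sum _ (fun γ' _ =>
    integrable_term hmeas _ _ _))]
  apply Finset.sum_eq_zero; intro γ _
  rw [integral_finset_sum _ (fun γ' _ => integrable_term hmeas _ _ _)]
  apply Finset.sum_eq_zero; intro γ' _
  rw [MeasureTheory.integral_const_mul]
  rw [Finset.mem_filter] at hβ hβ'
  have hinj : Function.Injective (fun k => (β k : ℕ)) := inj_coe hβ.2
  have hinj' : Function.Injective (fun k => (β' k : ℕ)) := inj_coe hβ'.2
  set s1 : Finset ℕ := Finset.image (fun k => (β k : ℕ)) Finset.univ with hs1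
  set s2 : Finset ℕ := Finset.image (fun k => (β' k : ℕ)) Finset.univ with hs2
  have hc1 : s1.card = ℓ := by
    rw [hs1, Finset.card_image_of_injective _ hinj]; simp
  have hc2 : s2.card = ℓ' := by
    rw [hs2, Finset.card_image_of_injective _ hinj']; simp
  have hsne : s1 ≠ s2 := fun h => hne (by rw [← hc1, ← hc2, h])
  have hcases : (¬ s1 ⊆ s2) ∨ (¬ s2 ⊆ s1) := by
    by_contra h
    push_neg at h
    exact hsne (Finset.Subset.antisymm h.1 h.2)
  have hzero : ∫ ω, ∏ k : Fin ℓ ⊕ Fin ℓ',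
      Sum.elim (fun k => phi p (w (γ k))) (fun k => phi p (w (γ' k))) k
        (ξ (Sum.elim (fun k => (β k : ℕ)) (fun k => (β' k : ℕ)) k) ω) ∂μ = 0 := by
    rcases hcases with h | h
    · obtain ⟨i₀, hi₀1, hi₀2⟩ := Finset.not_subset.mp h
      obtain ⟨k, -, hk⟩ := Finset.mem_image.mp hi₀1
      apply integral_term_zero hmeas hindep _ _ (Sum.inl k)
      · rintro (j | j) hj
        · simp only [Sum.elim_inl] at hj
          exact congrArg Sum.inl (hinj hj)
        · exfalso
          apply hi₀2
          rw [hs2]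
          simp only [Sum.elim_inr, Sum.elim_inl] at hj
          rw [← hk, ← hj]
          exact Finset.mem_image_of_mem _ (Finset.mem_univ j)
      · exact integral_phi hmeas hp hdist _ _
    · obtain ⟨i₀, hi₀1, hi₀2⟩ := Finset.not_subset.mp h
      obtain ⟨k, -, hk⟩ := Finset.mem_image.mp hi₀1
      apply integral_term_zero hmeas hindep _ _ (Sum.inr k)
      · rintro (j | j) hj
        · exfalso
          apply hi₀2
          rw [hs1]
          simp only [Sum.elim_inr, Sum.elim_inl] at hj
          rw [← hk, ← hj]
          exact Finset.mem_image_of_mem _ (Finset.mem_univ j)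
        · simp only [Sum.elim_inr] at hj
          exact congrArg Sum.inr (hinj' hj)
      · exact integral_phi hmeas hp hdist _ _
  rw [hzero, mul_zero]

end HDAux

/-- the Hoeffding decomposition, eqs. (3.17)–(3.20):
`Z* - E[Z*] = Σ_{ℓ=1}^m V_ℓ`, the `V_ℓ` have mean zero and are pairwise
uncorrelated, and `Var Z* = Σ_{ℓ=1}^m E[V_ℓ²]`. -/
theorem hoeffding_decomposition {A : Type*} [Fintype A] [DecidableEq A]
    [MeasurableSpace A] [MeasurableSingletonClass A]
    (p : A → ℝ) (hp : ∀ a, 0 < p a) (hsum : ∑ a, p a = 1)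
    {Ω : Type*} [MeasurableSpace Ω] (μ : Measure Ω) [IsProbabilityMeasure μ]
    (ξ : ℕ → Ω → A) (hmeas : ∀ i, Measurable (ξ i))
    (hindep : iIndepFun ξ μ)
    (hdist : ∀ i a, μ {ω | ξ i ω = a} = ENNReal.ofReal (p a))
    (n m : ℕ) (w : Fin m → A) (hmn : m ≤ n) :
    (∀ ω, (∏ j, p (w j))⁻¹ * (subseqCount n m w (fun i => ξ i ω) : ℝ)
          - ∫ ω', (∏ j, p (w j))⁻¹ * (subseqCount n m w (fun i => ξ i ω') : ℝ) ∂μ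
        = ∑ ℓ ∈ Finset.Icc 1 m, Vell p n m w ξ ℓ ω)
    ∧ (∀ ℓ ∈ Finset.Icc 1 m, ∫ ω, Vell p n m w ξ ℓ ω ∂μ = 0)
    ∧ (∀ ℓ ∈ Finset.Icc 1 m, ∀ ℓ' ∈ Finset.Icc 1 m, ℓ ≠ ℓ' →
        ∫ ω, Vell p n m w ξ ℓ ω * Vell p n m w ξ ℓ' ω ∂μ = 0)
    ∧ variance
          (fun ω => (∏ j, p (w j))⁻¹ * (subseqCount n m w (fun i => ξ i ω) : ℝ)) μ
        = ∑ ℓ ∈ Finset.Icc 1 m, ∫ ω, (Vell p n m w ξ ℓ ω) ^ 2 ∂μ := by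
  set X : Ω → ℝ := fun ω => (∏ j, p (w j))⁻¹ * (subseqCount n m w (fun i => ξ i ω) : ℝ)
    with hX
  have hpt : ∀ ω, X ω = ∑ ℓ ∈ Finset.range (m+1), Vell p n m w ξ ℓ ω := by
    intro ω
    rw [hX]
    simp only [Vell]
    exact HDAux.pointwise p n m w (fun i => ξ i ω)
  have hrange : Finset.range (m+1) = insert 0 (Finset.Icc 1 m) := by
    ext k; simp; omega
  have h0notin : (0:ℕ) ∉ Finset.Icc 1 m := by simp
  set K : ℝ := ∑ β ∈ Finset.univ.filter
        (fun β : Fin 0 → Fin n => ∀ i j : Fin 0, i < j → β i < β j),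
      ∑ γ ∈ Finset.univ.filter
        (fun γ : Fin 0 → Fin m => ∀ i j : Fin 0, i < j → γ i < γ j),
        (gapCoeff n m 0 β γ : ℝ) with hK
  have hV0 : ∀ ω : Ω, Vell p n m w ξ 0 ω = K := by
    intro ω
    rw [Vell, hK]
    apply Finset.sum_congr rfl; intro β _
    apply Finset.sum_congr rfl; intro γ _
    simp
  have hEV : ∀ ℓ ∈ Finset.Icc 1 m, ∫ ω, Vell p n m w ξ ℓ ω ∂μ = 0 := by
    intro ℓ hℓ
    exact HDAux.Vell_integral hmeas hindep hp hdist n m w ℓ (Finset.mem_Icc.mp hℓ).1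
  have hEX : ∫ ω, X ω ∂μ = K := by
    rw [integral_congr_ae (Filter.Eventually.of_forall hpt),
      integral_finset_sum _ (fun ℓ _ => HDAux.integrable_Vell hmeas n m w ℓ),
      hrange, Finset.sum_insert h0notin]
    rw [integral_congr_ae (Filter.Eventually.of_forall hV0), integral_const]
    simp only [probReal_univ, one_smul]
    rw [Finset.sum_congr rfl hEV, Finset.sum_const_zero, add_zero]
  have part1 : ∀ ω, X ω - ∫ ω', X ω' ∂μ = ∑ ℓ ∈ Finset.Icc 1 m, Vell p n m w ξ ℓ ω := by
    intro ω
    rw [hEX, hpt ω, hrange, Finset.sum_insert h0notin, hV0 ω]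
    ring
  have part3 : ∀ ℓ ∈ Finset.Icc 1 m, ∀ ℓ' ∈ Finset.Icc 1 m, ℓ ≠ ℓ' →
      ∫ ω, Vell p n m w ξ ℓ ω * Vell p n m w ξ ℓ' ω ∂μ = 0 := by
    intro ℓ _ ℓ' _ hne
    exact HDAux.Vell_mul_integral hmeas hindep hp hdist n m w ℓ ℓ' hne
  refine ⟨part1, hEV, part3, ?_⟩
  -- variance
  choose Cf hCf using (fun ℓ : ℕ => HDAux.bound_Vell (p := p) (ξ := ξ) n m w ℓ)
  have hXfun : X = fun ω => ∑ ℓ ∈ Finset.range (m+1), Vell p n m w ξ ℓ ω := funext hpt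
  have hXmeas : Measurable X := by
    rw [hXfun]
    exact Finset.measurable_sum _ (fun ℓ _ => HDAux.measurable_Vell hmeas n m w ℓ)
  have hXbd : ∀ ω, |X ω| ≤ ∑ ℓ ∈ Finset.range (m+1), Cf ℓ := by
    intro ω
    rw [hXfun]
    exact (Finset.abs_sum_le_sum_abs _ _).trans
      (Finset.sum_le_sum (fun ℓ _ => hCf ℓ ω))
  have hX2 : MeasureTheory.MemLp X 2 μ := by
    apply MeasureTheory.MemLp.of_bound hXmeas.aestronglyMeasurable
      (∑ ℓ ∈ Finset.range (m+1), Cf ℓ)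
    exact Filter.Eventually.of_forall (fun ω => by
      rw [Real.norm_eq_abs]; exact hXbd ω)
  rw [variance_eq_integral hXmeas.aemeasurable]
  change ∫ ω, ((X - fun _ : Ω => ∫ ω', X ω' ∂μ) ^ 2) ω ∂μ = _
  have hsq : ∀ ω, ((X - fun _ : Ω => ∫ ω', X ω' ∂μ) ^ 2) ω
      = ∑ ℓ ∈ Finset.Icc 1 m, ∑ ℓ' ∈ Finset.Icc 1 m,
          Vell p n m w ξ ℓ ω * Vell p n m w ξ ℓ' ω := by
    intro ω
    have : ((X - fun _ : Ω => ∫ ω', X ω' ∂μ) ^ 2) ω = (X ω - ∫ ω', X ω' ∂μ) ^ 2 := rfl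
    rw [this, part1 ω, sq, Finset.sum_mul_sum]
  rw [integral_congr_ae (Filter.Eventually.of_forall hsq)]
  have hVVint : ∀ (ℓ ℓ' : ℕ),
      MeasureTheory.Integrable (fun ω => Vell p n m w ξ ℓ ω * Vell p n m w ξ ℓ' ω) μ := by
    intro ℓ ℓ'
    apply HDAux.integrable_bdd
      ((HDAux.measurable_Vell hmeas n m w ℓ).mul (HDAux.measurable_Vell hmeas n m w ℓ'))
      (Cf ℓ * Cf ℓ')
    intro ω
    rw [Pi.mul_apply, abs_mul]
    exact mul_le_mul (hCf ℓ ω) (hCf ℓ' ω) (abs_nonneg _)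
      ((abs_nonneg _).trans (hCf ℓ ω))
  rw [integral_finset_sum _ (fun ℓ _ => MeasureTheory.integrable_finset_sum _
    (fun ℓ' _ => hVVint ℓ ℓ'))]
  apply Finset.sum_congr rfl
  intro ℓ hℓ
  rw [integral_finset_sum _ (fun ℓ' _ => hVVint ℓ ℓ')]
  rw [Finset.sum_eq_single ℓ]
  · apply integral_congr_ae
    exact Filter.Eventually.of_forall (fun ω => (sq (Vell p n m w ξ ℓ ω)).symm)
  · intro ℓ' hℓ' hne
    exact part3 ℓ hℓ ℓ' hℓ' (Ne.symm hne)
  · intro h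
    exact absurd hℓ h
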